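/- Let α̃ = (0)(1 2 … n)(n+1 … 2n) ∈ S_0(2n). The number of pair partitions π ∈ 𝒫₂(n,n) (pairing {1,…,n} with {n+1,…,2n}) such that πα̃ is a product of (0) and n transpositions none of which is (n, 2n) equals n - 1. Explicitly these are π = (1, n+j)(2, n+j-1)⋯(j, n+1)(j+1, 2n)(j+2, 2n-1)⋯(n, n+j+1) for j = 1, …, n-1. -/
import Mathlib

namespace Stmt12

def f (n j i : ℕ) : ℕ :=
  if 1 ≤ i ∧ i ≤ j then n + j + 1 - i
  else if j + 1 ≤ i ∧ i ≤ n then 2*n + j + 1 - i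
  else if n + 1 ≤ i ∧ i ≤ n + j then n + j + 1 - i
  else if n + j + 1 ≤ i ∧ i ≤ 2*n then 2*n + j + 1 - i
  else i

lemma f_invol (n j : ℕ) (hj1 : 1 ≤ j) (hj2 : j ≤ n) : Function.Involutive (f n j) := by
  intro i
  unfold f
  split_ifs <;> omega

noncomputable def piJ (n j : ℕ) : Equiv.Perm ℕ :=
  if h : 1 ≤ j ∧ j ≤ n then Function.Involutive.toPerm (f n j) (f_invol n j h.1 h.2) else 1

lemma piJ_apply (n j : ℕ) (hj1 : 1 ≤ j) (hj2 : j ≤ n) (i : ℕ) : piJ n j i = f n j i := by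
  rw [piJ, dif_pos ⟨hj1, hj2⟩]
  rfl

def G (n j i : ℕ) : ℕ :=
  if i = n then n + j
  else if i = 2*n then j
  else if 1 ≤ i ∧ i < n then (if i < j then n+j-i else if i = j then 2*n else 2*n+j-i)
  else if n+1 ≤ i ∧ i < 2*n then (if i < n+j then n+j-i else if i = n+j then n else 2*n+j-i)
  else i

set_option maxHeartbeats 1600000 in
lemma G_lemma (n j : ℕ) (hn : 1 ≤ n) (hj1 : 1 ≤ j) (hj2 : j ≤ n - 1) :
    ∀ i, 1 ≤ i → i ≤ 2*n → 1 ≤ G n j i ∧ G n j i ≤ 2*n ∧ G n j (G n j i) = i ∧ G n j i ≠ i := by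
  have hG : ∀ k, 1 ≤ k → k ≤ 2*n → G n j k =
      (if k = n then n+j else if k = 2*n then j
       else if k < n then (if k < j then n+j-k else if k = j then 2*n else 2*n+j-k)
       else (if k < n+j then n+j-k else if k = n+j then n else 2*n+j-k)) := by
    intro k hk1 hk2
    unfold G
    split_ifs <;> omega
  intro i h1 h2
  rw [hG i h1 h2]
  split_ifs <;>
    refine ⟨by omega, by omega, ?_, by omega⟩ <;>
    rw [hG _ (by omega) (by omega)] <;>
    split_ifs <;> omega

set_option maxHeartbeats 1600000 in
/-- Characterization lemma: the explicit-formula description is equivalent to `π = piJ n j`. -/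
lemma lemC (n : ℕ) (hn : 1 ≤ n) (π : Equiv.Perm ℕ) (j : ℕ) (hj1 : 1 ≤ j) (hj2 : j ≤ n - 1) :
    ((∀ i, 1 ≤ i → i ≤ j → π i = n + j + 1 - i) ∧
     (∀ i, j + 1 ≤ i → i ≤ n → π i = 2 * n + j + 1 - i) ∧
     (π 0 = 0) ∧ (∀ i, 2 * n < i → π i = i) ∧
     (∀ i, 1 ≤ i → i ≤ 2 * n → π (π i) = i)) ↔ π = piJ n j := by
  have hjn : j ≤ n := by omega
  constructor
  · rintro ⟨F1, F2, h0, hout, hinv⟩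
    have hv1 : ∀ i, 1 ≤ i → i ≤ n → π i = f n j i := by
      intro i h1 h2
      by_cases h : i ≤ j
      · rw [F1 i h1 h]; unfold f; split_ifs <;> omega
      · rw [F2 i (by omega) h2]; unfold f; split_ifs <;> omega
    have hv2 : ∀ k, n + 1 ≤ k → k ≤ 2*n → π k = f n j k := by
      intro k h1 h2
      by_cases h : k ≤ n + j
      · have e1 : π (n+j+1-k) = k := by rw [F1 _ (by omega) (by omega)]; omega
        have e2 : π k = n+j+1-k := by
          conv_lhs => rw [← e1]
          exact hinv _ (by omega) (by omega)
        rw [e2]; unfold f; split_ifs <;> omega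
      · have e1 : π (2*n+j+1-k) = k := by rw [F2 _ (by omega) (by omega)]; omega
        have e2 : π k = 2*n+j+1-k := by
          conv_lhs => rw [← e1]
          exact hinv _ (by omega) (by omega)
        rw [e2]; unfold f; split_ifs <;> omega
    apply Equiv.ext
    intro i
    rw [piJ_apply n j hj1 hjn]
    by_cases hi0 : i = 0
    · subst hi0; rw [h0]; unfold f; split_ifs <;> omega
    by_cases hin : i ≤ n
    · exact hv1 i (by omega) hin
    by_cases hi2n : i ≤ 2*n
    · exact hv2 i (by omega) hi2n
    · rw [hout i (by omega)]; unfold f; split_ifs <;> omega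
  · rintro rfl
    refine ⟨?_, ?_, ?_, ?_, ?_⟩
    · intro i h1 h2; rw [piJ_apply n j hj1 hjn]; unfold f; split_ifs <;> omega
    · intro i h1 h2; rw [piJ_apply n j hj1 hjn]; unfold f; split_ifs <;> omega
    · rw [piJ_apply n j hj1 hjn]; unfold f; split_ifs <;> omega
    · intro i hi; rw [piJ_apply n j hj1 hjn]; unfold f; split_ifs <;> omega
    · intro i h1 h2
      rw [piJ_apply n j hj1 hjn i, piJ_apply n j hj1 hjn (f n j i)]
      exact f_invol n j hj1 hjn i

set_option maxHeartbeats 1600000 in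
/-- Each `piJ n j` with `1 ≤ j ≤ n-1` is in the set. -/
lemma lemB (n : ℕ) (hn : 1 ≤ n) (α : Equiv.Perm ℕ)
    (hα0 : α 0 = 0)
    (hα1 : ∀ i, 1 ≤ i → i < n → α i = i + 1) (hαn : α n = 1)
    (hα2 : ∀ i, n + 1 ≤ i → i < 2 * n → α i = i + 1) (hα2n : α (2 * n) = n + 1)
    (j : ℕ) (hj1 : 1 ≤ j) (hj2 : j ≤ n - 1) :
    ((∀ i, 1 ≤ i → i ≤ n → n + 1 ≤ piJ n j i ∧ piJ n j i ≤ 2 * n) ∧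
     (∀ i, 1 ≤ i → i ≤ 2 * n → piJ n j (piJ n j i) = i ∧ piJ n j i ≠ i) ∧
     (piJ n j 0 = 0) ∧ (∀ i, 2 * n < i → piJ n j i = i)) ∧
    ((piJ n j * α) 0 = 0 ∧
     (∀ i, 1 ≤ i → i ≤ 2 * n → (piJ n j * α) ((piJ n j * α) i) = i ∧ (piJ n j * α) i ≠ i) ∧
     (piJ n j * α) n ≠ 2 * n) := by
  have hjn : j ≤ n := by omega
  have hmul : ∀ x, (piJ n j * α) x = piJ n j (α x) := fun x => Equiv.Perm.mul_apply _ _ _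
  have hG : ∀ i, 1 ≤ i → i ≤ 2*n → (piJ n j * α) i = G n j i := by
    intro i h1 h2
    by_cases hin : i = n
    · rw [hin, hmul, hαn, piJ_apply n j hj1 hjn]; unfold f G; split_ifs <;> omega
    by_cases hi2n : i = 2*n
    · rw [hi2n, hmul, hα2n, piJ_apply n j hj1 hjn]; unfold f G; split_ifs <;> omega
    by_cases hlt : i < n
    · rw [hmul, hα1 i h1 hlt, piJ_apply n j hj1 hjn]; unfold f G; split_ifs <;> omega
    · rw [hmul, hα2 i (by omega) (by omega), piJ_apply n j hj1 hjn]
      unfold f G; split_ifs <;> omega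
  refine ⟨⟨?_, ?_, ?_, ?_⟩, ?_, ?_, ?_⟩
  · intro i h1 h2; rw [piJ_apply n j hj1 hjn]; unfold f; split_ifs <;> omega
  · intro i h1 h2
    constructor
    · rw [piJ_apply n j hj1 hjn i, piJ_apply n j hj1 hjn (f n j i)]
      exact f_invol n j hj1 hjn i
    · rw [piJ_apply n j hj1 hjn]; unfold f; split_ifs <;> omega
  · rw [piJ_apply n j hj1 hjn]; unfold f; split_ifs <;> omega
  · intro i hi; rw [piJ_apply n j hj1 hjn]; unfold f; split_ifs <;> omega
  · rw [hmul, hα0, piJ_apply n j hj1 hjn]; unfold f; split_ifs <;> omega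
  · intro i h1 h2
    obtain ⟨g1, g2, g3, g4⟩ := G_lemma n j hn hj1 hj2 i h1 h2
    constructor
    · rw [hG i h1 h2, hG _ g1 g2, g3]
    · rw [hG i h1 h2]; exact g4
  · rw [hG n hn (by omega)]; unfold G; split_ifs <;> omega

set_option maxHeartbeats 1600000 in
/-- Every member of the set is some `piJ n j`. -/
lemma lemA (n : ℕ) (hn : 1 ≤ n) (α : Equiv.Perm ℕ)
    (hα1 : ∀ i, 1 ≤ i → i < n → α i = i + 1) (hαn : α n = 1)
    (hα2 : ∀ i, n + 1 ≤ i → i < 2 * n → α i = i + 1) (hα2n : α (2 * n) = n + 1)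
    (π : Equiv.Perm ℕ)
    (h : ((∀ i, 1 ≤ i → i ≤ n → n + 1 ≤ π i ∧ π i ≤ 2 * n) ∧
      (∀ i, 1 ≤ i → i ≤ 2 * n → π (π i) = i ∧ π i ≠ i) ∧
      (π 0 = 0) ∧ (∀ i, 2 * n < i → π i = i)) ∧
     ((π * α) 0 = 0 ∧
      (∀ i, 1 ≤ i → i ≤ 2 * n → (π * α) ((π * α) i) = i ∧ (π * α) i ≠ i) ∧
      (π * α) n ≠ 2 * n)) :
    ∃ j, 1 ≤ j ∧ j ≤ n - 1 ∧ π = piJ n j := by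
  obtain ⟨⟨h1, h2, h0, hout⟩, hpa0, hpa2, hpan⟩ := h
  have hmul : ∀ x, (π * α) x = π (α x) := fun x => Equiv.Perm.mul_apply _ _ _
  have hb := h1 1 le_rfl hn
  set j := π 1 - n with hjdef
  have hπ1 : π 1 = n + j := by omega
  have hj1 : 1 ≤ j := by omega
  have hjn : j ≤ n := by omega
  have key : ∀ i, 1 ≤ i → i + 1 ≤ n → π (i+1) = (if π i = n+1 then 2*n else π i - 1) := by
    intro i hi1 hi2
    have hk := h1 (i+1) (by omega) hi2
    have e1 : (π * α) i = π (i+1) := by rw [hmul, hα1 i hi1 (by omega)]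
    have e2 := (hpa2 i hi1 (by omega)).1
    rw [e1, hmul] at e2
    by_cases hc : π (i+1) = 2*n
    · rw [hc, hα2n] at e2
      have e3 : π (π (n+1)) = n+1 := (h2 (n+1) (by omega) (by omega)).1
      rw [e2] at e3
      rw [if_pos e3, hc]
    · rw [hα2 _ (by omega) (by omega)] at e2
      have e3 : π (π (π (i+1) + 1)) = π (i+1) + 1 := (h2 _ (by omega) (by omega)).1
      rw [e2] at e3
      rw [if_neg (by omega)]
      omega
  have main : ∀ i, 1 ≤ i → i ≤ n → π i = (if i ≤ j then n+j+1-i else 2*n+j+1-i) := by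
    intro i
    induction i with
    | zero => intro hi _; exact absurd hi (by omega)
    | succ m ih =>
      intro _ hm
      rcases Nat.eq_zero_or_pos m with rfl | hm0
      · rw [hπ1, if_pos hj1]
        omega
      · have hrec := key m hm0 hm
        rw [ih hm0 (by omega)] at hrec
        rw [hrec]
        split_ifs <;> omega
  have hpan' : (π * α) n = n + j := by rw [hmul, hαn, hπ1]
  rw [hpan'] at hpan
  have hjn1 : j ≤ n - 1 := by omega
  refine ⟨j, hj1, hjn1, (lemC n hn π j hj1 hjn1).mp ⟨?_, ?_, h0, hout, fun i a b => (h2 i a b).1⟩⟩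
  · intro i hi1 hij
    rw [main i hi1 (by omega), if_pos hij]
  · intro i hi1 hin
    rw [main i (by omega) hin, if_neg (by omega)]

end Stmt12

set_option maxHeartbeats 1600000 in
/-- With `α̃ = (0)(1 2 … n)(n+1 … 2n)` as a permutation of ℕ, the set of
pair partitions `π ∈ 𝒫₂(n,n)` such that `πα̃` is the fixed point `0` together with `n`
transpositions none of which is `(n, 2n)` has exactly `n - 1` elements; explicitly these
are `π = (1,n+j)(2,n+j-1)⋯(j,n+1)(j+1,2n)(j+2,2n-1)⋯(n,n+j+1)` for `j = 1,…,n-1`. -/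
theorem stmt12 (n : ℕ) (hn : 1 ≤ n) (α : Equiv.Perm ℕ)
    (hα0 : α 0 = 0)
    (hα1 : ∀ i, 1 ≤ i → i < n → α i = i + 1) (hαn : α n = 1)
    (hα2 : ∀ i, n + 1 ≤ i → i < 2 * n → α i = i + 1) (hα2n : α (2 * n) = n + 1)
    (hαout : ∀ i, 2 * n < i → α i = i) :
    Set.ncard {π : Equiv.Perm ℕ |
      ((∀ i, 1 ≤ i → i ≤ n → n + 1 ≤ π i ∧ π i ≤ 2 * n) ∧
       (∀ i, 1 ≤ i → i ≤ 2 * n → π (π i) = i ∧ π i ≠ i) ∧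
       (π 0 = 0) ∧ (∀ i, 2 * n < i → π i = i)) ∧
      ((π * α) 0 = 0 ∧
       (∀ i, 1 ≤ i → i ≤ 2 * n → (π * α) ((π * α) i) = i ∧ (π * α) i ≠ i) ∧
       (π * α) n ≠ 2 * n)} = n - 1 ∧
    ∀ π : Equiv.Perm ℕ,
      (π ∈ {π : Equiv.Perm ℕ |
        ((∀ i, 1 ≤ i → i ≤ n → n + 1 ≤ π i ∧ π i ≤ 2 * n) ∧
         (∀ i, 1 ≤ i → i ≤ 2 * n → π (π i) = i ∧ π i ≠ i) ∧
         (π 0 = 0) ∧ (∀ i, 2 * n < i → π i = i)) ∧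
        ((π * α) 0 = 0 ∧
         (∀ i, 1 ≤ i → i ≤ 2 * n → (π * α) ((π * α) i) = i ∧ (π * α) i ≠ i) ∧
         (π * α) n ≠ 2 * n)}) ↔
      (∃ j, 1 ≤ j ∧ j ≤ n - 1 ∧
        (∀ i, 1 ≤ i → i ≤ j → π i = n + j + 1 - i) ∧
        (∀ i, j + 1 ≤ i → i ≤ n → π i = 2 * n + j + 1 - i) ∧
        (π 0 = 0) ∧ (∀ i, 2 * n < i → π i = i) ∧
        (∀ i, 1 ≤ i → i ≤ 2 * n → π (π i) = i)) := by
  constructor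
  · have hset : {π : Equiv.Perm ℕ |
      ((∀ i, 1 ≤ i → i ≤ n → n + 1 ≤ π i ∧ π i ≤ 2 * n) ∧
       (∀ i, 1 ≤ i → i ≤ 2 * n → π (π i) = i ∧ π i ≠ i) ∧
       (π 0 = 0) ∧ (∀ i, 2 * n < i → π i = i)) ∧
      ((π * α) 0 = 0 ∧
       (∀ i, 1 ≤ i → i ≤ 2 * n → (π * α) ((π * α) i) = i ∧ (π * α) i ≠ i) ∧
       (π * α) n ≠ 2 * n)} = Stmt12.piJ n '' Set.Icc 1 (n-1) := by
      ext π
      simp only [Set.mem_setOf_eq, Set.mem_image, Set.mem_Icc]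
      constructor
      · intro h
        obtain ⟨j, hj1, hj2, rfl⟩ := Stmt12.lemA n hn α hα1 hαn hα2 hα2n π h
        exact ⟨j, ⟨hj1, hj2⟩, rfl⟩
      · rintro ⟨j, ⟨hj1, hj2⟩, rfl⟩
        exact Stmt12.lemB n hn α hα0 hα1 hαn hα2 hα2n j hj1 hj2
    have hinj : Set.InjOn (Stmt12.piJ n) (Set.Icc 1 (n-1)) := by
      intro a ha b hb hab
      rw [Set.mem_Icc] at ha hb
      have h1 : Stmt12.piJ n a 1 = Stmt12.piJ n b 1 := by rw [hab]
      rw [Stmt12.piJ_apply n a ha.1 (by omega), Stmt12.piJ_apply n b hb.1 (by omega)] at h1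
      have ea : Stmt12.f n a 1 = n + a := by unfold Stmt12.f; split_ifs <;> omega
      have eb : Stmt12.f n b 1 = n + b := by unfold Stmt12.f; split_ifs <;> omega
      omega
    rw [hset, Set.ncard_image_of_injOn hinj, ← Finset.coe_Icc, Set.ncard_coe_finset,
      Nat.card_Icc]
    omega
  · intro π
    rw [Set.mem_setOf_eq]
    constructor
    · intro h
      obtain ⟨j, hj1, hj2, rfl⟩ := Stmt12.lemA n hn α hα1 hαn hα2 hα2n π h
      obtain ⟨F1, F2, c0, cout, cinv⟩ := (Stmt12.lemC n hn _ j hj1 hj2).mpr rfl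
      exact ⟨j, hj1, hj2, F1, F2, c0, cout, cinv⟩
    · rintro ⟨j, hj1, hj2, F1, F2, c0, cout, cinv⟩
      have hpi : π = Stmt12.piJ n j := (Stmt12.lemC n hn π j hj1 hj2).mp ⟨F1, F2, c0, cout, cinv⟩
      rw [hpi]
      exact Stmt12.lemB n hn α hα0 hα1 hαn hα2 hα2n j hj1 hj2
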